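/- arXiv:1311.0620 — 2 statements merged into one kernel-verified Lean document; each statement's English description precedes it below -/
import Mathlib

section
/- For the intermediate arrangement A = A^k_ℓ(r) with 1 ≤ k ≤ ℓ−1, and a hyperplane H = H_{ij}(ζ) with 1 ≤ i ≤ k < j ≤ ℓ, the restriction A^H is linearly isomorphic to A^k_{ℓ−1}(r); for H = H_i a coordinate hyperplane, A^{H} is linearly isomorphic to A^{ℓ−1}_{ℓ−1}(r); for H = H_{ij}(ζ) with 1 ≤ i < j ≤ k, A^H ≅ A^{k−1}_{ℓ−1}(r); and for H = H_{ij}(ζ) with k < i < j ≤ ℓ, A^H ≅ A^{k+1}_{ℓ−1}(r). -/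
open Submodule

/-- The intersection lattice of the arrangement `A` with ambient space `Z`:
all subspaces of the form `Z ⊓ sInf S` for `S ⊆ A` (the empty intersection gives `Z`). -/
def ArrLatIn {V : Type*} [AddCommGroup V] [Module ℂ V] (Z : Submodule ℂ V)
    (A : Set (Submodule ℂ V)) : Set (Submodule ℂ V) :=
  {X | ∃ S ⊆ A, X = Z ⊓ sInf S}

/-- `X` is a modular element of the lattice `ℒ` (ordered by reverse inclusion):
`X ∈ ℒ` and `X + Y ∈ ℒ` for every `Y ∈ ℒ`. -/
def ModularIn {V : Type*} [AddCommGroup V] [Module ℂ V]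
    (ℒ : Set (Submodule ℂ V)) (X : Submodule ℂ V) : Prop :=
  X ∈ ℒ ∧ ∀ Y ∈ ℒ, X ⊔ Y ∈ ℒ

/-- The restriction of the arrangement `A` to the subspace `Z`:
the hyperplanes `Z ∩ H` for `H ∈ A` with `Z ⊄ H`. -/
def Restrict {V : Type*} [AddCommGroup V] [Module ℂ V]
    (A : Set (Submodule ℂ V)) (Z : Submodule ℂ V) : Set (Submodule ℂ V) :=
  {W | ∃ H ∈ A, ¬ Z ≤ H ∧ W = Z ⊓ H}

/-- A (lattice of subspaces ordered by reverse inclusion) is supersolvable if it admits a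
maximal chain `C 0 > C 1 > ... > C n` (top to bottom) consisting of modular elements. -/
def LatSupersolvable {V : Type*} [AddCommGroup V] [Module ℂ V]
    (ℒ : Set (Submodule ℂ V)) : Prop :=
  ∃ n, ∃ C : Fin (n + 1) → Submodule ℂ V,
    (∀ i, ModularIn ℒ (C i)) ∧
    (∀ W ∈ ℒ, W ≤ C 0) ∧
    (∀ W ∈ ℒ, C (Fin.last n) ≤ W) ∧
    (∀ i : Fin n, C i.succ < C i.castSucc) ∧
    (∀ i : Fin n, ∀ W ∈ ℒ, ¬(C i.succ < W ∧ W < C i.castSucc))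

/-- The product of two arrangements. -/
def ProdArr {V₁ V₂ : Type*} [AddCommGroup V₁] [Module ℂ V₁] [AddCommGroup V₂] [Module ℂ V₂]
    (A₁ : Set (Submodule ℂ V₁)) (A₂ : Set (Submodule ℂ V₂)) : Set (Submodule ℂ (V₁ × V₂)) :=
  ((fun H => H.prod (⊤ : Submodule ℂ V₂)) '' A₁) ∪
    ((fun H => (⊤ : Submodule ℂ V₁).prod H) '' A₂)

/-- The coordinate hyperplane `ker x_i` in `ℂ^ℓ`. -/
noncomputable def coordH (ℓ : ℕ) (i : Fin ℓ) : Submodule ℂ (Fin ℓ → ℂ) :=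
  LinearMap.ker (LinearMap.proj i : (Fin ℓ → ℂ) →ₗ[ℂ] ℂ)

/-- The hyperplane `ker (x_i - ζ x_j)` in `ℂ^ℓ`. -/
noncomputable def diffH (ℓ : ℕ) (i j : Fin ℓ) (ζ : ℂ) : Submodule ℂ (Fin ℓ → ℂ) :=
  LinearMap.ker ((LinearMap.proj i : (Fin ℓ → ℂ) →ₗ[ℂ] ℂ) - ζ • (LinearMap.proj j))

/-- The intermediate arrangement `A^k_ℓ(r)`: the first `k` coordinate hyperplanes together with
all hyperplanes `ker (x_i - ζ x_j)` for `i < j` and `ζ` an `r`-th root of unity. -/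
def interArr (r ℓ k : ℕ) : Set (Submodule ℂ (Fin ℓ → ℂ)) :=
  {H | ∃ i : Fin ℓ, (i : ℕ) < k ∧ H = coordH ℓ i} ∪
    {H | ∃ i j : Fin ℓ, i < j ∧ ∃ ζ : ℂ, ζ ^ r = 1 ∧ H = diffH ℓ i j ζ}

/-- The Boolean subarrangement `B^k_ℓ` of the first `k` coordinate hyperplanes of `ℂ^ℓ`. -/
def boolArr (ℓ k : ℕ) : Set (Submodule ℂ (Fin ℓ → ℂ)) :=
  {H | ∃ i : Fin ℓ, (i : ℕ) < k ∧ H = coordH ℓ i}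

/-- The degree-one polynomial corresponding to a linear form on `ℂ^n`. -/
noncomputable def linPoly {n : ℕ} (f : (Fin n → ℂ) →ₗ[ℂ] ℂ) : MvPolynomial (Fin n) ℂ :=
  ∑ i, MvPolynomial.C (f (Pi.single i 1)) * MvPolynomial.X i

/-- The module of derivations `D(Q) = {θ | θ(Q) ∈ Q·S}` is free with a homogeneous basis
`θ 0, ..., θ (n-1)` of polynomial degrees `e 0, ..., e (n-1)`. -/
def IsFreeWithExponents (n : ℕ) (Q : MvPolynomial (Fin n) ℂ) (e : Fin n → ℕ) : Prop :=
  ∃ θ : Fin n → Derivation ℂ (MvPolynomial (Fin n) ℂ) (MvPolynomial (Fin n) ℂ),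
    (∀ i, θ i Q ∈ Ideal.span {Q}) ∧
    (∀ i j, ((θ i) (MvPolynomial.X j)).IsHomogeneous (e i)) ∧
    (∀ c : Fin n → MvPolynomial (Fin n) ℂ, (∑ i, c i • θ i) = 0 → ∀ i, c i = 0) ∧
    (∀ η : Derivation ℂ (MvPolynomial (Fin n) ℂ) (MvPolynomial (Fin n) ℂ),
      η Q ∈ Ideal.span {Q} →
      ∃ c : Fin n → MvPolynomial (Fin n) ℂ, η = ∑ i, c i • θ i)

/-- An arrangement is irreducible if it is not a product of two nonempty arrangements, i.e.
there is no nontrivial direct sum decomposition of the ambient space such that every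
hyperplane contains one of the two summands. -/
def IsIrreducibleArr {V : Type*} [AddCommGroup V] [Module ℂ V]
    (A : Set (Submodule ℂ V)) : Prop :=
  ¬ ∃ V₁ V₂ : Submodule ℂ V, V₁ ≠ ⊥ ∧ V₂ ≠ ⊥ ∧ V₁ ⊓ V₂ = ⊥ ∧ V₁ ⊔ V₂ = ⊤ ∧
      ∀ H ∈ A, V₁ ≤ H ∨ V₂ ≤ H

/-- The restriction of `A` to the hyperplane `H` is linearly isomorphic to the intermediate
arrangement `A^{k'}_{ℓ'}(r)`. -/
def RestrEquiv (r ℓ : ℕ) (A : Set (Submodule ℂ (Fin ℓ → ℂ))) (H : Submodule ℂ (Fin ℓ → ℂ))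
    (ℓ' k' : ℕ) : Prop :=
  ∃ φ : (Fin ℓ' → ℂ) →ₗ[ℂ] (Fin ℓ → ℂ), Function.Injective φ ∧ LinearMap.range φ = H ∧
    Restrict A H = (fun K => Submodule.map φ K) '' interArr r ℓ' k'

namespace S12

lemma mem_coordH {n : ℕ} (a : Fin n) (x : Fin n → ℂ) : x ∈ coordH n a ↔ x a = 0 := by
  simp [coordH]

lemma mem_diffH {n : ℕ} (a b : Fin n) (ζ : ℂ) (x : Fin n → ℂ) :
    x ∈ diffH n a b ζ ↔ x a = ζ * x b := by
  simp [diffH, sub_eq_zero]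

lemma root_ne_zero {r : ℕ} (hr : r ≠ 0) {ζ : ℂ} (h : ζ ^ r = 1) : ζ ≠ 0 := by
  rintro rfl
  simp [zero_pow hr] at h

lemma root_inv {r : ℕ} {ζ : ℂ} (h : ζ ^ r = 1) : (ζ⁻¹) ^ r = 1 := by
  rw [inv_pow, h, inv_one]

lemma root_div {r : ℕ} {ζ η : ℂ} (h : ζ ^ r = 1) (h' : η ^ r = 1) : (ζ / η) ^ r = 1 := by
  rw [div_pow, h, h', div_one]

lemma root_mul {r : ℕ} {ζ η : ℂ} (h : ζ ^ r = 1) (h' : η ^ r = 1) : (ζ * η) ^ r = 1 := by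
  rw [mul_pow, h, h', mul_one]

lemma diffH_comm {n : ℕ} (a b : Fin n) {ζ : ℂ} (hζ : ζ ≠ 0) :
    diffH n a b ζ = diffH n b a ζ⁻¹ := by
  ext x; rw [mem_diffH, mem_diffH]
  constructor
  · intro h; rw [h, inv_mul_cancel_left₀ hζ]
  · intro h; rw [h, mul_inv_cancel_left₀ hζ]

lemma diffH_self_eq_top {n : ℕ} (a : Fin n) : diffH n a a 1 = ⊤ := by
  ext x; simp [mem_diffH]

lemma diffH_self_eq_coordH {n : ℕ} (a : Fin n) {ζ : ℂ} (hζ : ζ ≠ 1) :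
    diffH n a a ζ = coordH n a := by
  ext x; rw [mem_diffH, mem_coordH]
  constructor
  · intro h
    have h2 : (1 - ζ) * x a = 0 := by linear_combination h
    rcases mul_eq_zero.1 h2 with h' | h'
    · exact absurd (by linear_combination -h') hζ
    · exact h'
  · intro h; rw [h, mul_zero]

lemma coordH_ne_top {n : ℕ} (a : Fin n) : coordH n a ≠ ⊤ := by
  intro h
  have : (Pi.single a 1 : Fin n → ℂ) ∈ coordH n a := h ▸ mem_top
  rw [mem_coordH, Pi.single_eq_same] at this
  exact one_ne_zero this

lemma diffH_ne_top {n : ℕ} {a b : Fin n} (hab : a ≠ b) (ζ : ℂ) : diffH n a b ζ ≠ ⊤ := by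
  intro h
  have : (Pi.single a 1 : Fin n → ℂ) ∈ diffH n a b ζ := h ▸ mem_top
  rw [mem_diffH, Pi.single_eq_same, Pi.single_eq_of_ne (Ne.symm hab), mul_zero] at this
  exact one_ne_zero this

lemma coordH_mem_interArr {r n k : ℕ} {a : Fin n} (h : (a : ℕ) < k) :
    coordH n a ∈ interArr r n k := Or.inl ⟨a, h, rfl⟩

lemma diffH_mem_interArr {r n k : ℕ} (hr : r ≠ 0) {a b : Fin n} (hab : a ≠ b) {ζ : ℂ}
    (hζ : ζ ^ r = 1) : diffH n a b ζ ∈ interArr r n k := by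
  rcases lt_or_gt_of_ne hab with h | h
  · exact Or.inr ⟨a, b, h, ζ, hζ, rfl⟩
  · exact Or.inr ⟨b, a, h, ζ⁻¹, root_inv hζ, diffH_comm a b (root_ne_zero hr hζ)⟩

noncomputable def phi (n : ℕ) (c : Fin (n+1) → ℂ) (τ : Fin (n+1) → Fin n) :
    (Fin n → ℂ) →ₗ[ℂ] (Fin (n+1) → ℂ) where
  toFun y := fun p => c p * y (τ p)
  map_add' y z := by funext p; simp [mul_add]
  map_smul' t y := by funext p; simp [smul_eq_mul]; ring

lemma mem_comap_phi_diffH {n : ℕ} {c : Fin (n+1) → ℂ} {τ : Fin (n+1) → Fin n}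
    (a b : Fin (n+1)) (η : ℂ) (x : Fin n → ℂ) :
    x ∈ comap (phi n c τ) (diffH (n+1) a b η) ↔ c a * x (τ a) = η * (c b * x (τ b)) := by
  rw [mem_comap, mem_diffH]; rfl

lemma mem_comap_phi_coordH {n : ℕ} {c : Fin (n+1) → ℂ} {τ : Fin (n+1) → Fin n}
    (a : Fin (n+1)) (x : Fin n → ℂ) :
    x ∈ comap (phi n c τ) (coordH (n+1) a) ↔ c a * x (τ a) = 0 := by
  rw [mem_comap, mem_coordH]; rfl

lemma comap_phi_coordH {n : ℕ} {c : Fin (n+1) → ℂ} {τ : Fin (n+1) → Fin n}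
    {a : Fin (n+1)} (h : c a ≠ 0) :
    comap (phi n c τ) (coordH (n+1) a) = coordH n (τ a) := by
  ext x; rw [mem_comap_phi_coordH, mem_coordH, mul_eq_zero, or_iff_right h]

lemma comap_phi_coordH_top {n : ℕ} {c : Fin (n+1) → ℂ} {τ : Fin (n+1) → Fin n}
    {a : Fin (n+1)} (h : c a = 0) :
    comap (phi n c τ) (coordH (n+1) a) = ⊤ := by
  ext x; rw [mem_comap_phi_coordH, h, zero_mul]; simp

lemma comap_phi_diffH {n : ℕ} {c : Fin (n+1) → ℂ} {τ : Fin (n+1) → Fin n}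
    {a b : Fin (n+1)} (η : ℂ) (h : c a ≠ 0) :
    comap (phi n c τ) (diffH (n+1) a b η) = diffH n (τ a) (τ b) (η * c b / c a) := by
  ext x; rw [mem_comap_phi_diffH, mem_diffH]
  rw [div_mul_eq_mul_div, eq_div_iff h]
  constructor
  · intro h'; linear_combination h'
  · intro h'; field_simp at h' ⊢; linear_combination h'

lemma comap_phi_diffH_left_zero {n : ℕ} {c : Fin (n+1) → ℂ} {τ : Fin (n+1) → Fin n}
    {a b : Fin (n+1)} {η : ℂ} (h : c a = 0) (hη : η ≠ 0) (hb : c b ≠ 0) :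
    comap (phi n c τ) (diffH (n+1) a b η) = coordH n (τ b) := by
  ext x; rw [mem_comap_phi_diffH, mem_coordH, h, zero_mul, eq_comm, mul_eq_zero,
    mul_eq_zero, or_iff_right hη, or_iff_right hb]

lemma comap_phi_diffH_right_zero {n : ℕ} {c : Fin (n+1) → ℂ} {τ : Fin (n+1) → Fin n}
    {a b : Fin (n+1)} {η : ℂ} (h : c b = 0) (ha : c a ≠ 0) :
    comap (phi n c τ) (diffH (n+1) a b η) = coordH n (τ a) := by
  ext x; rw [mem_comap_phi_diffH, mem_coordH, h, zero_mul, mul_zero, mul_eq_zero,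
    or_iff_right ha]

lemma not_le_iff_comap_ne_top {n : ℕ} {c : Fin (n+1) → ℂ} {τ : Fin (n+1) → Fin n}
    {H H' : Submodule ℂ (Fin (n+1) → ℂ)} (hrange : LinearMap.range (phi n c τ) = H) :
    ¬ H ≤ H' ↔ comap (phi n c τ) H' ≠ ⊤ := by
  rw [← hrange, not_iff_not, LinearMap.range_le_iff_comap]

theorem main_framework {n : ℕ} (A : Set (Submodule ℂ (Fin (n+1) → ℂ)))
    (B : Set (Submodule ℂ (Fin n → ℂ))) (H : Submodule ℂ (Fin (n+1) → ℂ))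
    (c : Fin (n+1) → ℂ) (τ : Fin (n+1) → Fin n) (ρ : Fin n → Fin (n+1))
    (hτρ : ∀ m, τ (ρ m) = m) (hcρ : ∀ m, c (ρ m) = 1)
    (hmem : ∀ y, phi n c τ y ∈ H)
    (hsec : ∀ x ∈ H, ∀ p, x p = c p * x (ρ (τ p)))
    (hF : ∀ H' ∈ A, comap (phi n c τ) H' ≠ ⊤ → comap (phi n c τ) H' ∈ B)
    (hB : ∀ K ∈ B, K ≠ ⊤ ∧ ∃ H' ∈ A, comap (phi n c τ) H' = K) :
    Function.Injective (phi n c τ) ∧ LinearMap.range (phi n c τ) = H ∧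
      Restrict A H = (fun K => Submodule.map (phi n c τ) K) '' B := by
  have hinj : Function.Injective (phi n c τ) := by
    intro y z h
    funext m
    have h1 : phi n c τ y (ρ m) = phi n c τ z (ρ m) := by rw [h]
    simpa [phi, hτρ, hcρ] using h1
  have hrange : LinearMap.range (phi n c τ) = H := by
    apply le_antisymm
    · rintro _ ⟨y, rfl⟩; exact hmem y
    · intro x hx
      exact ⟨fun m => x (ρ m), funext fun p => (hsec x hx p).symm⟩
  refine ⟨hinj, hrange, ?_⟩
  ext W
  constructor
  · rintro ⟨H', hH'A, hnle, rfl⟩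
    refine ⟨comap (phi n c τ) H',
      hF H' hH'A ((not_le_iff_comap_ne_top hrange).1 hnle), ?_⟩
    simp only [Submodule.map_comap_eq, hrange]
  · rintro ⟨K, hK, rfl⟩
    obtain ⟨hKtop, H', hH'A, hcom⟩ := hB K hK
    refine ⟨H', hH'A, (not_le_iff_comap_ne_top hrange).2 (hcom ▸ hKtop), ?_⟩
    simp only [← hcom, Submodule.map_comap_eq, hrange]


theorem diff_case {r n k k' : ℕ} (hr : 2 ≤ r) {i j : Fin (n+1)} (hij : i < j)
    {ζ : ℂ} (hζ : ζ ^ r = 1)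
    (τ : Fin (n+1) → Fin n) (ρ : Fin n → Fin (n+1))
    (P1 : ∀ a b : Fin (n+1), a < b → τ a = τ b → a = i ∧ b = j)
    (P2 : ∀ m, τ (ρ m) = m)
    (P3 : ∀ m, ρ m ≠ i)
    (P4 : ∀ a : Fin (n+1), (a : ℕ) < k → ((τ a) : ℕ) < k')
    (P5 : ((τ i) : ℕ) < k')
    (P6 : ∀ m : Fin n, (m : ℕ) < k' → (∃ a : Fin (n+1), (a : ℕ) < k ∧ τ a = m) ∨ m = τ i)
    (P8 : τ i = τ j) :
    ∃ φ : (Fin n → ℂ) →ₗ[ℂ] (Fin (n+1) → ℂ), Function.Injective φ ∧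
      LinearMap.range φ = diffH (n+1) i j ζ ∧
      Restrict (interArr r (n+1) k) (diffH (n+1) i j ζ) =
        (fun K => Submodule.map φ K) '' interArr r n k' := by
  have hr0 : r ≠ 0 := by omega
  have hζ0 : ζ ≠ 0 := root_ne_zero hr0 hζ
  have hji : j ≠ i := ne_of_gt hij
  set c : Fin (n+1) → ℂ := fun a => if a = i then ζ else 1 with hc
  have hci : c i = ζ := if_pos rfl
  have hcj : c j = 1 := if_neg hji
  have hc0 : ∀ a, c a ≠ 0 := by
    intro a; rw [hc]; dsimp only; split
    · exact hζ0
    · exact one_ne_zero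
  have hcroot : ∀ a, (c a) ^ r = 1 := by
    intro a; rw [hc]; dsimp only; split
    · exact hζ
    · exact one_pow r
  have hcρ : ∀ m, c (ρ m) = 1 := fun m => if_neg (P3 m)
  have hρτ : ∀ p : Fin (n+1), p ≠ i → ρ (τ p) = p := by
    intro p hp
    rcases lt_trichotomy (ρ (τ p)) p with h | h | h
    · exact absurd (P1 _ _ h (P2 (τ p))).1 (P3 (τ p))
    · exact h
    · exact absurd (P1 _ _ h (P2 (τ p)).symm).1 hp
  have hmem : ∀ y, phi n c τ y ∈ diffH (n+1) i j ζ := by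
    intro y
    rw [mem_diffH]
    show c i * y (τ i) = ζ * (c j * y (τ j))
    rw [hci, hcj, P8, one_mul]
  have hsec : ∀ x ∈ diffH (n+1) i j ζ, ∀ p, x p = c p * x (ρ (τ p)) := by
    intro x hx p
    by_cases hpi : p = i
    · subst hpi
      rw [hci, P8, hρτ j hji]
      exact (mem_diffH _ _ _ _).1 hx
    · rw [hρτ p hpi]
      have : c p = 1 := if_neg hpi
      rw [this, one_mul]
  -- a primitive r-th root of unity
  obtain ⟨ω, hωr, hω1⟩ : ∃ ω : ℂ, ω ^ r = 1 ∧ ω ≠ 1 := by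
    have hprim := Complex.isPrimitiveRoot_exp r hr0
    exact ⟨_, hprim.pow_eq_one, hprim.ne_one (by omega)⟩
  have hF : ∀ H' ∈ interArr r (n+1) k, comap (phi n c τ) H' ≠ ⊤ →
      comap (phi n c τ) H' ∈ interArr r n k' := by
    rintro H' (⟨a, hak, rfl⟩ | ⟨a, b, hab, η, hηr, rfl⟩) hne
    · rw [comap_phi_coordH (hc0 a)]
      exact coordH_mem_interArr (P4 a hak)
    · by_cases hcoll : a = i ∧ b = j
      · obtain ⟨rfl, rfl⟩ := hcoll
        have hcomp : comap (phi n c τ) (diffH (n+1) a b η) = diffH n (τ a) (τ a) (η / ζ) := by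
          rw [comap_phi_diffH η (hc0 a), ← P8, hcj, hci, mul_one]
        by_cases hηζ : η / ζ = 1
        · exact absurd (by rw [hcomp, hηζ, diffH_self_eq_top]) hne
        · rw [hcomp, diffH_self_eq_coordH _ hηζ]
          exact coordH_mem_interArr P5
      · have hτab : τ a ≠ τ b := fun h => hcoll (P1 a b hab h)
        rw [comap_phi_diffH η (hc0 a)]
        exact diffH_mem_interArr hr0 hτab
          (root_div (root_mul hηr (hcroot b)) (hcroot a))
  have hB : ∀ K ∈ interArr r n k', K ≠ ⊤ ∧
      ∃ H' ∈ interArr r (n+1) k, comap (phi n c τ) H' = K := by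
    rintro K (⟨m, hmk, rfl⟩ | ⟨s, t, hst, ξ, hξr, rfl⟩)
    · refine ⟨coordH_ne_top m, ?_⟩
      rcases P6 m hmk with ⟨a, hak, hτa⟩ | rfl
      · exact ⟨coordH (n+1) a, coordH_mem_interArr hak,
          by rw [comap_phi_coordH (hc0 a), hτa]⟩
      · refine ⟨diffH (n+1) i j (ζ * ω), Or.inr ⟨i, j, hij, ζ * ω, root_mul hζ hωr, rfl⟩, ?_⟩
        rw [comap_phi_diffH _ (hc0 i), ← P8, hcj, hci, mul_one,
          mul_div_cancel_left₀ _ hζ0, diffH_self_eq_coordH _ hω1]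
    · refine ⟨diffH_ne_top (ne_of_lt hst) ξ, ?_⟩
      have hρst : ρ s ≠ ρ t := fun h => (ne_of_lt hst) (by rw [← P2 s, ← P2 t, h])
      refine ⟨diffH (n+1) (ρ s) (ρ t) ξ, diffH_mem_interArr hr0 hρst hξr, ?_⟩
      rw [comap_phi_diffH ξ (hc0 (ρ s)), P2, P2, hcρ, hcρ, mul_one, div_one]
  obtain ⟨hinj, hrange, hres⟩ := main_framework (interArr r (n+1) k) (interArr r n k')
    (diffH (n+1) i j ζ) c τ ρ P2 hcρ hmem hsec hF hB
  exact ⟨phi n c τ, hinj, hrange, hres⟩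


theorem coord_case {r n k : ℕ} (hr : 2 ≤ r) (hk : k ≤ n) {i : Fin (n+1)}
    (hik : (i : ℕ) < k) :
    ∃ φ : (Fin n → ℂ) →ₗ[ℂ] (Fin (n+1) → ℂ), Function.Injective φ ∧
      LinearMap.range φ = coordH (n+1) i ∧
      Restrict (interArr r (n+1) k) (coordH (n+1) i) =
        (fun K => Submodule.map φ K) '' interArr r n n := by
  have hr0 : r ≠ 0 := by omega
  have hn : 1 ≤ n := by omega
  set c : Fin (n+1) → ℂ := fun a => if a = i then 0 else 1 with hc
  have hci : c i = 0 := if_pos rfl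
  have hcne : ∀ a : Fin (n+1), a ≠ i → c a = 1 := fun a h => if_neg h
  set τ : Fin (n+1) → Fin n :=
    fun a => ⟨if (a : ℕ) < (i : ℕ) then (a : ℕ) else (a : ℕ) - 1, by
      have h1 := a.isLt; have h2 := i.isLt; split <;> omega⟩ with hτ
  set ρ : Fin n → Fin (n+1) :=
    fun m => ⟨if (m : ℕ) < (i : ℕ) then (m : ℕ) else (m : ℕ) + 1, by
      have h1 := m.isLt; split <;> omega⟩ with hρ
  have hτval : ∀ a : Fin (n+1),
      (τ a : ℕ) = if (a : ℕ) < (i : ℕ) then (a : ℕ) else (a : ℕ) - 1 := fun a => rfl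
  have hρval : ∀ m : Fin n,
      (ρ m : ℕ) = if (m : ℕ) < (i : ℕ) then (m : ℕ) else (m : ℕ) + 1 := fun m => rfl
  have hτρ : ∀ m, τ (ρ m) = m := by
    intro m
    rw [Fin.ext_iff, hτval, hρval]
    have := m.isLt
    split_ifs <;> omega
  have hρi : ∀ m, ρ m ≠ i := by
    intro m h
    rw [Fin.ext_iff, hρval] at h
    have := m.isLt
    split_ifs at h <;> omega
  have hcρ : ∀ m, c (ρ m) = 1 := fun m => hcne _ (hρi m)
  have hρτ : ∀ p : Fin (n+1), p ≠ i → ρ (τ p) = p := by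
    intro p hp
    have hpv : (p : ℕ) ≠ (i : ℕ) := fun h => hp (Fin.ext h)
    rw [Fin.ext_iff, hρval, hτval]
    have := p.isLt
    split_ifs <;> omega
  have hτinj : ∀ a b : Fin (n+1), a ≠ i → b ≠ i → a ≠ b → τ a ≠ τ b := by
    intro a b ha hb hab h
    rw [Fin.ext_iff, hτval, hτval] at h
    have hav : (a : ℕ) ≠ (i : ℕ) := fun h' => ha (Fin.ext h')
    have hbv : (b : ℕ) ≠ (i : ℕ) := fun h' => hb (Fin.ext h')
    have habv : (a : ℕ) ≠ (b : ℕ) := fun h' => hab (Fin.ext h')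
    split_ifs at h <;> omega
  have hmem : ∀ y, phi n c τ y ∈ coordH (n+1) i := by
    intro y
    rw [mem_coordH]
    show c i * y (τ i) = 0
    rw [hci, zero_mul]
  have hsec : ∀ x ∈ coordH (n+1) i, ∀ p, x p = c p * x (ρ (τ p)) := by
    intro x hx p
    by_cases hpi : p = i
    · subst hpi
      rw [hci, zero_mul]
      exact (mem_coordH _ _).1 hx
    · rw [hρτ p hpi, hcne p hpi, one_mul]
  have hF : ∀ H' ∈ interArr r (n+1) k, comap (phi n c τ) H' ≠ ⊤ →
      comap (phi n c τ) H' ∈ interArr r n n := by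
    rintro H' (⟨a, hak, rfl⟩ | ⟨a, b, hab, η, hηr, rfl⟩) hne
    · by_cases hai : a = i
      · exact absurd (comap_phi_coordH_top (hai ▸ hci)) hne
      · rw [comap_phi_coordH (by rw [hcne a hai]; exact one_ne_zero)]
        exact coordH_mem_interArr (τ a).isLt
    · by_cases hai : a = i
      · have hbi : b ≠ i := hai ▸ ne_of_gt hab
        rw [comap_phi_diffH_left_zero (by rw [hai]; exact hci) (root_ne_zero hr0 hηr)
          (by rw [hcne b hbi]; exact one_ne_zero)]
        exact coordH_mem_interArr (τ b).isLt
      · by_cases hbi : b = i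
        · rw [comap_phi_diffH_right_zero (by rw [hbi]; exact hci)
            (by rw [hcne a hai]; exact one_ne_zero)]
          exact coordH_mem_interArr (τ a).isLt
        · rw [comap_phi_diffH η (by rw [hcne a hai]; exact one_ne_zero)]
          refine diffH_mem_interArr hr0 (hτinj a b hai hbi (ne_of_lt hab)) ?_
          rw [hcne a hai, hcne b hbi, mul_one, div_one]
          exact hηr
  have hB : ∀ K ∈ interArr r n n, K ≠ ⊤ ∧
      ∃ H' ∈ interArr r (n+1) k, comap (phi n c τ) H' = K := by
    rintro K (⟨m, hmk, rfl⟩ | ⟨s, t, hst, ξ, hξr, rfl⟩)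
    · refine ⟨coordH_ne_top m, diffH (n+1) i (ρ m) 1,
        diffH_mem_interArr hr0 (fun h => hρi m h.symm) (one_pow r), ?_⟩
      rw [comap_phi_diffH_left_zero hci one_ne_zero
        (by rw [hcρ m]; exact one_ne_zero), hτρ]
    · have hρst : ρ s ≠ ρ t := fun h => (ne_of_lt hst) (by rw [← hτρ s, ← hτρ t, h])
      refine ⟨diffH_ne_top (ne_of_lt hst) ξ, diffH (n+1) (ρ s) (ρ t) ξ,
        diffH_mem_interArr hr0 hρst hξr, ?_⟩
      rw [comap_phi_diffH ξ (by rw [hcρ s]; exact one_ne_zero), hτρ, hτρ, hcρ, hcρ,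
        mul_one, div_one]
  obtain ⟨hinj, hrange, hres⟩ := main_framework (interArr r (n+1) k) (interArr r n n)
    (coordH (n+1) i) c τ ρ hτρ hcρ hmem hsec hF hB
  exact ⟨phi n c τ, hinj, hrange, hres⟩


theorem case1 {r n k : ℕ} (hr : 2 ≤ r) {i j : Fin (n+1)} (hij : i < j)
    (hik : (i : ℕ) < k) (hkj : k ≤ (j : ℕ)) {ζ : ℂ} (hζ : ζ ^ r = 1) :
    ∃ φ : (Fin n → ℂ) →ₗ[ℂ] (Fin (n+1) → ℂ), Function.Injective φ ∧
      LinearMap.range φ = diffH (n+1) i j ζ ∧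
      Restrict (interArr r (n+1) k) (diffH (n+1) i j ζ) =
        (fun K => Submodule.map φ K) '' interArr r n k := by
  have hIJ : (i : ℕ) < (j : ℕ) := hij
  have hjn := j.isLt
  set τ : Fin (n+1) → Fin n := fun a =>
    ⟨if (a : ℕ) = (j : ℕ) then (i : ℕ) else if (a : ℕ) < (j : ℕ) then (a : ℕ)
      else (a : ℕ) - 1, by
        have := a.isLt; split_ifs <;> omega⟩ with hτ
  set ρ : Fin n → Fin (n+1) := fun m =>
    ⟨if (m : ℕ) = (i : ℕ) then (j : ℕ) else if (m : ℕ) < (j : ℕ) then (m : ℕ)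
      else (m : ℕ) + 1, by
        have := m.isLt; split_ifs <;> omega⟩ with hρ
  have hτval : ∀ a : Fin (n+1), (τ a : ℕ) = if (a : ℕ) = (j : ℕ) then (i : ℕ)
      else if (a : ℕ) < (j : ℕ) then (a : ℕ) else (a : ℕ) - 1 := fun a => rfl
  have hρval : ∀ m : Fin n, (ρ m : ℕ) = if (m : ℕ) = (i : ℕ) then (j : ℕ)
      else if (m : ℕ) < (j : ℕ) then (m : ℕ) else (m : ℕ) + 1 := fun m => rfl
  have P1 : ∀ a b : Fin (n+1), a < b → τ a = τ b → a = i ∧ b = j := by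
    intro a b hab h
    have hab' : (a : ℕ) < (b : ℕ) := hab
    rw [Fin.ext_iff] at h
    rw [Fin.ext_iff, Fin.ext_iff]
    rw [hτval, hτval] at h
    have := a.isLt; have := b.isLt
    split_ifs at h <;> omega
  have P2 : ∀ m, τ (ρ m) = m := by
    intro m
    rw [Fin.ext_iff, hτval, hρval]
    have := m.isLt
    split_ifs <;> omega
  have P3 : ∀ m, ρ m ≠ i := by
    intro m h
    rw [Fin.ext_iff, hρval] at h
    have := m.isLt
    split_ifs at h <;> omega
  have P4 : ∀ a : Fin (n+1), (a : ℕ) < k → ((τ a) : ℕ) < k := by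
    intro a ha
    rw [hτval]
    split_ifs <;> omega
  have P5 : ((τ i) : ℕ) < k := by
    rw [hτval]
    split_ifs <;> omega
  have P6 : ∀ m : Fin n, (m : ℕ) < k →
      (∃ a : Fin (n+1), (a : ℕ) < k ∧ τ a = m) ∨ m = τ i := by
    intro m hm
    have := m.isLt
    refine Or.inl ⟨⟨(m : ℕ), by omega⟩, by simpa using hm, ?_⟩
    rw [Fin.ext_iff, hτval]
    simp only [Fin.val_mk]
    split_ifs <;> omega
  have P8 : τ i = τ j := by
    rw [Fin.ext_iff, hτval, hτval]
    split_ifs <;> omega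
  exact diff_case hr hij hζ τ ρ P1 P2 P3 P4 P5 P6 P8


theorem case3 {r n k : ℕ} (hr : 2 ≤ r) {i j : Fin (n+1)} (hij : i < j)
    (hjk : (j : ℕ) < k) {ζ : ℂ} (hζ : ζ ^ r = 1) :
    ∃ φ : (Fin n → ℂ) →ₗ[ℂ] (Fin (n+1) → ℂ), Function.Injective φ ∧
      LinearMap.range φ = diffH (n+1) i j ζ ∧
      Restrict (interArr r (n+1) k) (diffH (n+1) i j ζ) =
        (fun K => Submodule.map φ K) '' interArr r n (k - 1) := by
  have hIJ : (i : ℕ) < (j : ℕ) := hij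
  have hjn := j.isLt
  set τ : Fin (n+1) → Fin n := fun a =>
    ⟨if (a : ℕ) = (j : ℕ) then (i : ℕ) else if (a : ℕ) < (j : ℕ) then (a : ℕ)
      else (a : ℕ) - 1, by
        have := a.isLt; split_ifs <;> omega⟩ with hτ
  set ρ : Fin n → Fin (n+1) := fun m =>
    ⟨if (m : ℕ) = (i : ℕ) then (j : ℕ) else if (m : ℕ) < (j : ℕ) then (m : ℕ)
      else (m : ℕ) + 1, by
        have := m.isLt; split_ifs <;> omega⟩ with hρ
  have hτval : ∀ a : Fin (n+1), (τ a : ℕ) = if (a : ℕ) = (j : ℕ) then (i : ℕ)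
      else if (a : ℕ) < (j : ℕ) then (a : ℕ) else (a : ℕ) - 1 := fun a => rfl
  have hρval : ∀ m : Fin n, (ρ m : ℕ) = if (m : ℕ) = (i : ℕ) then (j : ℕ)
      else if (m : ℕ) < (j : ℕ) then (m : ℕ) else (m : ℕ) + 1 := fun m => rfl
  have P1 : ∀ a b : Fin (n+1), a < b → τ a = τ b → a = i ∧ b = j := by
    intro a b hab h
    have hab' : (a : ℕ) < (b : ℕ) := hab
    rw [Fin.ext_iff] at h
    rw [Fin.ext_iff, Fin.ext_iff]
    rw [hτval, hτval] at h
    have := a.isLt; have := b.isLt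
    split_ifs at h <;> omega
  have P2 : ∀ m, τ (ρ m) = m := by
    intro m
    rw [Fin.ext_iff, hτval, hρval]
    have := m.isLt
    split_ifs <;> omega
  have P3 : ∀ m, ρ m ≠ i := by
    intro m h
    rw [Fin.ext_iff, hρval] at h
    have := m.isLt
    split_ifs at h <;> omega
  have P4 : ∀ a : Fin (n+1), (a : ℕ) < k → ((τ a) : ℕ) < k - 1 := by
    intro a ha
    rw [hτval]
    split_ifs <;> omega
  have P5 : ((τ i) : ℕ) < k - 1 := by
    rw [hτval]
    split_ifs <;> omega
  have P6 : ∀ m : Fin n, (m : ℕ) < k - 1 →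
      (∃ a : Fin (n+1), (a : ℕ) < k ∧ τ a = m) ∨ m = τ i := by
    intro m hm
    have := m.isLt
    by_cases hmJ : (m : ℕ) < (j : ℕ)
    · refine Or.inl ⟨⟨(m : ℕ), by omega⟩, by simpa using (by omega : (m : ℕ) < k), ?_⟩
      rw [Fin.ext_iff, hτval]
      simp only [Fin.val_mk]
      split_ifs <;> omega
    · refine Or.inl ⟨⟨(m : ℕ) + 1, by omega⟩, by simpa using (by omega : (m : ℕ) + 1 < k), ?_⟩
      rw [Fin.ext_iff, hτval]
      simp only [Fin.val_mk]
      split_ifs <;> omega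
  have P8 : τ i = τ j := by
    rw [Fin.ext_iff, hτval, hτval]
    split_ifs <;> omega
  exact diff_case hr hij hζ τ ρ P1 P2 P3 P4 P5 P6 P8

theorem case4 {r n k : ℕ} (hr : 2 ≤ r) {i j : Fin (n+1)} (hij : i < j)
    (hki : k ≤ (i : ℕ)) {ζ : ℂ} (hζ : ζ ^ r = 1) :
    ∃ φ : (Fin n → ℂ) →ₗ[ℂ] (Fin (n+1) → ℂ), Function.Injective φ ∧
      LinearMap.range φ = diffH (n+1) i j ζ ∧
      Restrict (interArr r (n+1) k) (diffH (n+1) i j ζ) =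
        (fun K => Submodule.map φ K) '' interArr r n (k + 1) := by
  have hIJ : (i : ℕ) < (j : ℕ) := hij
  have hjn := j.isLt
  set τ : Fin (n+1) → Fin n := fun a =>
    ⟨if (a : ℕ) = (i : ℕ) ∨ (a : ℕ) = (j : ℕ) then k
      else if (a : ℕ) < (i : ℕ) then (if (a : ℕ) < k then (a : ℕ) else (a : ℕ) + 1)
      else if (a : ℕ) < (j : ℕ) then (a : ℕ) else (a : ℕ) - 1, by
        have := a.isLt; split_ifs <;> omega⟩ with hτ
  set ρ : Fin n → Fin (n+1) := fun m =>
    ⟨if (m : ℕ) = k then (j : ℕ) else if (m : ℕ) < k then (m : ℕ)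
      else if (m : ℕ) ≤ (i : ℕ) then (m : ℕ) - 1
      else if (m : ℕ) < (j : ℕ) then (m : ℕ) else (m : ℕ) + 1, by
        have := m.isLt; split_ifs <;> omega⟩ with hρ
  have hτval : ∀ a : Fin (n+1), (τ a : ℕ) = if (a : ℕ) = (i : ℕ) ∨ (a : ℕ) = (j : ℕ) then k
      else if (a : ℕ) < (i : ℕ) then (if (a : ℕ) < k then (a : ℕ) else (a : ℕ) + 1)
      else if (a : ℕ) < (j : ℕ) then (a : ℕ) else (a : ℕ) - 1 := fun a => rfl
  have hρval : ∀ m : Fin n, (ρ m : ℕ) = if (m : ℕ) = k then (j : ℕ)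
      else if (m : ℕ) < k then (m : ℕ)
      else if (m : ℕ) ≤ (i : ℕ) then (m : ℕ) - 1
      else if (m : ℕ) < (j : ℕ) then (m : ℕ) else (m : ℕ) + 1 := fun m => rfl
  have P1 : ∀ a b : Fin (n+1), a < b → τ a = τ b → a = i ∧ b = j := by
    intro a b hab h
    have hab' : (a : ℕ) < (b : ℕ) := hab
    rw [Fin.ext_iff] at h
    rw [Fin.ext_iff, Fin.ext_iff]
    rw [hτval, hτval] at h
    have := a.isLt; have := b.isLt
    split_ifs at h <;> omega
  have P2 : ∀ m, τ (ρ m) = m := by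
    intro m
    rw [Fin.ext_iff, hτval, hρval]
    have := m.isLt
    split_ifs <;> omega
  have P3 : ∀ m, ρ m ≠ i := by
    intro m h
    rw [Fin.ext_iff, hρval] at h
    have := m.isLt
    split_ifs at h <;> omega
  have P4 : ∀ a : Fin (n+1), (a : ℕ) < k → ((τ a) : ℕ) < k + 1 := by
    intro a ha
    rw [hτval]
    split_ifs <;> omega
  have P5 : ((τ i) : ℕ) < k + 1 := by
    rw [hτval]
    split_ifs <;> omega
  have P6 : ∀ m : Fin n, (m : ℕ) < k + 1 →
      (∃ a : Fin (n+1), (a : ℕ) < k ∧ τ a = m) ∨ m = τ i := by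
    intro m hm
    have := m.isLt
    by_cases hmk : (m : ℕ) < k
    · refine Or.inl ⟨⟨(m : ℕ), by omega⟩, by simpa using hmk, ?_⟩
      rw [Fin.ext_iff, hτval]
      simp only [Fin.val_mk]
      split_ifs <;> omega
    · refine Or.inr ?_
      rw [Fin.ext_iff, hτval]
      split_ifs <;> omega
  have P8 : τ i = τ j := by
    rw [Fin.ext_iff, hτval, hτval]
    split_ifs <;> omega
  exact diff_case hr hij hζ τ ρ P1 P2 P3 P4 P5 P6 P8

end S12

/-- Restriction types of `A = A^k_ℓ(r)` for `1 ≤ k ≤ ℓ−1`: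
`A^{H_{ij}(ζ)} ≅ A^k_{ℓ−1}(r)` for `i ≤ k < j`; `A^{H_i} ≅ A^{ℓ−1}_{ℓ−1}(r)`;
`A^{H_{ij}(ζ)} ≅ A^{k−1}_{ℓ−1}(r)` for `i < j ≤ k`; and
`A^{H_{ij}(ζ)} ≅ A^{k+1}_{ℓ−1}(r)` for `k < i < j`. -/
theorem stmt_12 (r ℓ k : ℕ) (hr : 2 ≤ r) (hℓ : 2 ≤ ℓ) (hk1 : 1 ≤ k) (hk2 : k ≤ ℓ - 1) :
    (∀ (i j : Fin ℓ) (ζ : ℂ), ζ ^ r = 1 → i < j → (i : ℕ) < k → k ≤ (j : ℕ) →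
      RestrEquiv r ℓ (interArr r ℓ k) (diffH ℓ i j ζ) (ℓ - 1) k) ∧
    (∀ i : Fin ℓ, (i : ℕ) < k →
      RestrEquiv r ℓ (interArr r ℓ k) (coordH ℓ i) (ℓ - 1) (ℓ - 1)) ∧
    (∀ (i j : Fin ℓ) (ζ : ℂ), ζ ^ r = 1 → i < j → (j : ℕ) < k →
      RestrEquiv r ℓ (interArr r ℓ k) (diffH ℓ i j ζ) (ℓ - 1) (k - 1)) ∧
    (∀ (i j : Fin ℓ) (ζ : ℂ), ζ ^ r = 1 → i < j → k ≤ (i : ℕ) →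
      RestrEquiv r ℓ (interArr r ℓ k) (diffH ℓ i j ζ) (ℓ - 1) (k + 1)) := by
  obtain ⟨n, rfl⟩ : ∃ n, ℓ = n + 1 := ⟨ℓ - 1, by omega⟩
  have hkn : k ≤ n := by omega
  refine ⟨?_, ?_, ?_, ?_⟩
  · intro i j ζ hζ hij hik hkj
    exact S12.case1 hr hij hik hkj hζ
  · intro i hik
    exact S12.coord_case hr hkn hik
  · intro i j ζ hζ hij hjk
    exact S12.case3 hr hij hjk hζ
  · intro i j ζ hζ hij hki
    exact S12.case4 hr hij hki hζ
end

section
/- Let W = G(r,r,ℓ) with r ≥ 2, ℓ = 2p−1 for p ≥ 2, A = A(W), and ζ an r-th root of unity. Set X = ∩_{i=1}^{p−1} H_{2i−1,2i}(ζ), where H_{i,j}(ζ) = ker(x_i − ζ x_j). Then X ∈ L(A), dim X = p, and the restriction A^X is linearly isomorphic to the intermediate arrangement A^{p−1}_p(r). -/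
open Submodule

/-- auxiliary scaling factor -/
noncomputable def cfac (ζ : ℂ) (m : ℕ) : ℂ := if m % 2 = 0 then 1 else ζ⁻¹

lemma cfac_ne (ζ : ℂ) (hζ : ζ ≠ 0) (m : ℕ) : cfac ζ m ≠ 0 := by
  unfold cfac; split
  · exact one_ne_zero
  · exact inv_ne_zero hζ

lemma cfac_pow (r : ℕ) (ζ : ℂ) (hζ : ζ ^ r = 1) (m : ℕ) : (cfac ζ m) ^ r = 1 := by
  unfold cfac; split
  · exact one_pow r
  · rw [inv_pow, hζ, inv_one]

/-- the parametrization of X -/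
noncomputable def phiMap (p : ℕ) (ζ : ℂ) : (Fin p → ℂ) →ₗ[ℂ] (Fin (2*p-1) → ℂ) :=
  LinearMap.pi fun m => cfac ζ m.val • LinearMap.proj ⟨m.val / 2, by have := m.isLt; omega⟩

lemma phiMap_apply (p : ℕ) (ζ : ℂ) (y : Fin p → ℂ) (m : Fin (2*p-1)) :
    phiMap p ζ y m = cfac ζ m.val * y ⟨m.val / 2, by have := m.isLt; omega⟩ := rfl

lemma phiMap_apply' (p : ℕ) (ζ : ℂ) (y : Fin p → ℂ) (m : Fin (2*p-1)) (i : Fin p)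
    (h : m.val / 2 = i.val) : phiMap p ζ y m = cfac ζ m.val * y i := by
  obtain ⟨i, hi⟩ := i
  subst h
  exact phiMap_apply p ζ y m

lemma comp_phi (p : ℕ) (ζ ξ : ℂ) (a b : Fin (2*p-1)) (i j : Fin p)
    (ha : a.val / 2 = i.val) (hb : b.val / 2 = j.val) :
    ((LinearMap.proj a - ξ • LinearMap.proj b : (Fin (2*p-1) → ℂ) →ₗ[ℂ] ℂ) ∘ₗ phiMap p ζ)
      = cfac ζ a.val • (LinearMap.proj i : (Fin p → ℂ) →ₗ[ℂ] ℂ)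
        - (ξ * cfac ζ b.val) • LinearMap.proj j := by
  refine LinearMap.ext fun y => ?_
  simp only [LinearMap.comp_apply, LinearMap.sub_apply, LinearMap.smul_apply,
    LinearMap.proj_apply, smul_eq_mul]
  rw [phiMap_apply' p ζ y a i ha, phiMap_apply' p ζ y b j hb]
  ring

lemma ker_two (p : ℕ) (c d : ℂ) (hc : c ≠ 0) (i j : Fin p) :
    LinearMap.ker (c • (LinearMap.proj i : (Fin p → ℂ) →ₗ[ℂ] ℂ) - d • LinearMap.proj j)
      = diffH p i j (d / c) := by
  ext y
  simp only [diffH, LinearMap.mem_ker, LinearMap.sub_apply, LinearMap.smul_apply,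
    LinearMap.proj_apply, smul_eq_mul, sub_eq_zero]
  constructor <;> intro h
  · field_simp
    linear_combination h
  · field_simp at h
    linear_combination h

lemma ker_one (p : ℕ) (e : ℂ) (he : e ≠ 0) (i : Fin p) :
    LinearMap.ker (e • (LinearMap.proj i : (Fin p → ℂ) →ₗ[ℂ] ℂ)) = coordH p i := by
  ext y
  simp [coordH, he]

lemma phiMap_apply'' (p : ℕ) (ζ : ℂ) (y : Fin p → ℂ) (mv : ℕ) (hm : mv < 2*p-1) (i : Fin p)
    (h : mv / 2 = i.val) : phiMap p ζ y ⟨mv, hm⟩ = cfac ζ mv * y i :=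
  phiMap_apply' p ζ y ⟨mv, hm⟩ i h

lemma comp_phi' (p : ℕ) (ζ ξ : ℂ) (av bv : ℕ) (ha' : av < 2*p-1) (hb' : bv < 2*p-1)
    (i j : Fin p) (ha : av / 2 = i.val) (hb : bv / 2 = j.val) :
    ((LinearMap.proj ⟨av, ha'⟩ - ξ • LinearMap.proj ⟨bv, hb'⟩ :
        (Fin (2*p-1) → ℂ) →ₗ[ℂ] ℂ) ∘ₗ phiMap p ζ)
      = cfac ζ av • (LinearMap.proj i : (Fin p → ℂ) →ₗ[ℂ] ℂ)
        - (ξ * cfac ζ bv) • LinearMap.proj j :=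
  comp_phi p ζ ξ ⟨av, ha'⟩ ⟨bv, hb'⟩ i j ha hb

set_option maxHeartbeats 1000000 in
/-- For `W = G(r,r,ℓ)` with `ℓ = 2p−1`, `p ≥ 2`, `r ≥ 2`, and
`X = ∩_{i=1}^{p−1} H_{2i−1,2i}(ζ)`, we have `X ∈ L(A)`, `dim X = p`, and the restriction
`A^X` is linearly isomorphic to the intermediate arrangement `A^{p−1}_p(r)`. -/
theorem stmt_18 (r p ℓ : ℕ) (hr : 2 ≤ r) (hp : 2 ≤ p) (hℓ : ℓ = 2 * p - 1)
    (ζ : ℂ) (hζ : ζ ^ r = 1) :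
    (⨅ i : Fin (p - 1), diffH ℓ ⟨2 * i.val, by have := i.isLt; omega⟩
        ⟨2 * i.val + 1, by have := i.isLt; omega⟩ ζ) ∈ ArrLatIn ⊤ (interArr r ℓ 0) ∧
    Module.finrank ℂ ↥(⨅ i : Fin (p - 1), diffH ℓ ⟨2 * i.val, by have := i.isLt; omega⟩
        ⟨2 * i.val + 1, by have := i.isLt; omega⟩ ζ) = p ∧
    ∃ φ : (Fin p → ℂ) →ₗ[ℂ] (Fin ℓ → ℂ), Function.Injective φ ∧
      LinearMap.range φ = (⨅ i : Fin (p - 1), diffH ℓ ⟨2 * i.val, by have := i.isLt; omega⟩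
        ⟨2 * i.val + 1, by have := i.isLt; omega⟩ ζ) ∧
      Restrict (interArr r ℓ 0)
          (⨅ i : Fin (p - 1), diffH ℓ ⟨2 * i.val, by have := i.isLt; omega⟩
            ⟨2 * i.val + 1, by have := i.isLt; omega⟩ ζ) =
        (fun K => Submodule.map φ K) '' interArr r p (p - 1) := by
  subst hℓ
  have hr0 : r ≠ 0 := by omega
  have hζ0 : ζ ≠ 0 := by
    intro h
    rw [h, zero_pow hr0] at hζ
    exact zero_ne_one hζ
  -- the range of phiMap is X
  have hrange : LinearMap.range (phiMap p ζ)
      = ⨅ i : Fin (p - 1), diffH (2*p-1) ⟨2 * i.val, by have := i.isLt; omega⟩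
          ⟨2 * i.val + 1, by have := i.isLt; omega⟩ ζ := by
    apply le_antisymm
    · rintro x ⟨y, rfl⟩
      rw [Submodule.mem_iInf]
      intro i
      simp only [diffH, LinearMap.mem_ker, LinearMap.sub_apply, LinearMap.smul_apply,
        LinearMap.proj_apply, smul_eq_mul]
      rw [phiMap_apply'' p ζ y (2 * i.val) (by have := i.isLt; omega)
            ⟨i.val, by have := i.isLt; omega⟩ (by show 2 * i.val / 2 = i.val; omega),
          phiMap_apply'' p ζ y (2 * i.val + 1) (by have := i.isLt; omega)
            ⟨i.val, by have := i.isLt; omega⟩ (by show (2 * i.val + 1) / 2 = i.val; omega)]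
      rw [show cfac ζ (2 * i.val) = 1 from if_pos (by omega),
          show cfac ζ (2 * i.val + 1) = ζ⁻¹ from if_neg (by omega)]
      rw [one_mul, ← mul_assoc, mul_inv_cancel₀ hζ0, one_mul, sub_self]
    · intro x hx
      rw [Submodule.mem_iInf] at hx
      refine ⟨fun i => x ⟨2 * i.val, by have := i.isLt; omega⟩, ?_⟩
      funext m
      rw [phiMap_apply' p ζ _ m ⟨m.val / 2, by have := m.isLt; omega⟩ rfl]
      simp only []
      by_cases hm : m.val % 2 = 0
      · rw [show cfac ζ m.val = 1 from if_pos hm, one_mul]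
        exact congrArg x (Fin.ext (by simp; omega))
      · rw [show cfac ζ m.val = ζ⁻¹ from if_neg hm]
        have hk := hx ⟨m.val / 2, by have := m.isLt; omega⟩
        simp only [diffH, LinearMap.mem_ker, LinearMap.sub_apply, LinearMap.smul_apply,
          LinearMap.proj_apply, smul_eq_mul, sub_eq_zero] at hk
        have hk2 : x ⟨2 * ((⟨m.val / 2, by have := m.isLt; omega⟩ : Fin (p-1)) : ℕ),
            by have := m.isLt; simp; omega⟩ = ζ * x m := by
          rw [hk]
          exact congrArg (ζ * x ·) (Fin.ext (by simp; omega))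
        rw [hk2, ← mul_assoc, inv_mul_cancel₀ hζ0, one_mul]
  -- injectivity
  have hpsi : ∀ (y : Fin p → ℂ) (i : Fin p),
      phiMap p ζ y ⟨2 * i.val, by have := i.isLt; omega⟩ = y i := by
    intro y i
    rw [phiMap_apply'' p ζ y (2 * i.val) (by have := i.isLt; omega) i (by omega),
      show cfac ζ (2 * i.val) = 1 from if_pos (by omega), one_mul]
  have hinj : Function.Injective (phiMap p ζ) := by
    intro y z h
    funext i
    have h2 := congrFun h ⟨2 * i.val, by have := i.isLt; omega⟩
    rw [hpsi, hpsi] at h2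
    exact h2
  -- key: intersection with a kernel is the image of the kernel of the composition
  have hkey : ∀ f : (Fin (2*p-1) → ℂ) →ₗ[ℂ] ℂ,
      Submodule.map (phiMap p ζ) (LinearMap.ker (f ∘ₗ phiMap p ζ))
        = LinearMap.range (phiMap p ζ) ⊓ LinearMap.ker f := by
    intro f
    rw [LinearMap.ker_comp, Submodule.map_comap_eq]
  -- part 1 : lattice membership
  have G1 : LinearMap.range (phiMap p ζ) ∈ ArrLatIn ⊤ (interArr r (2*p-1) 0) := by
    refine ⟨Set.range (fun i : Fin (p - 1) =>
      diffH (2*p-1) ⟨2 * i.val, by have := i.isLt; omega⟩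
        ⟨2 * i.val + 1, by have := i.isLt; omega⟩ ζ), ?_, ?_⟩
    · rintro H ⟨i, rfl⟩
      exact Or.inr ⟨_, _, Fin.mk_lt_mk.mpr (by omega), ζ, hζ, rfl⟩
    · rw [sInf_range, top_inf_eq]
      exact hrange
  -- part 2 : dimension
  have G2 : Module.finrank ℂ ↥(LinearMap.range (phiMap p ζ)) = p := by
    rw [LinearMap.finrank_range_of_inj hinj]
    simp
  -- part 3 : restriction
  have G3 : Restrict (interArr r (2*p-1) 0) (LinearMap.range (phiMap p ζ))
      = (fun K => Submodule.map (phiMap p ζ) K) '' interArr r p (p - 1) := by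
    ext W
    simp only [Restrict, Set.mem_setOf_eq, Set.mem_image]
    constructor
    · rintro ⟨H, hH, hle, rfl⟩
      rcases hH with ⟨i, hi, -⟩ | ⟨a, b, hab, ξ, hξ, rfl⟩
      · omega
      have hab' : a.val < b.val := hab
      by_cases hsame : a.val / 2 = b.val / 2
      · -- coordinate hyperplane case
        have hcomp := comp_phi' p ζ ξ a.val b.val a.isLt b.isLt
          ⟨a.val / 2, by have := a.isLt; omega⟩ ⟨a.val / 2, by have := a.isLt; omega⟩
          rfl (by show b.val / 2 = a.val / 2; omega)
        simp only [Fin.eta] at hcomp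
        rw [← sub_smul] at hcomp
        have hne : cfac ζ a.val - ξ * cfac ζ b.val ≠ 0 := by
          intro h0
          apply hle
          refine LinearMap.range_le_ker_iff.mpr ?_
          rw [hcomp, h0, zero_smul]
        refine ⟨coordH p ⟨a.val / 2, by have := a.isLt; omega⟩,
          Or.inl ⟨_, by show a.val / 2 < p - 1; omega, rfl⟩, ?_⟩
        have h5 := hkey ((LinearMap.proj a : (Fin (2*p-1) → ℂ) →ₗ[ℂ] ℂ) - ξ • LinearMap.proj b)
        rw [hcomp, ker_one p _ hne] at h5
        exact h5
      · -- difference hyperplane case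
        have hij : a.val / 2 < b.val / 2 := by omega
        have hcomp := comp_phi' p ζ ξ a.val b.val a.isLt b.isLt
          ⟨a.val / 2, by have := a.isLt; omega⟩ ⟨b.val / 2, by have := b.isLt; omega⟩ rfl rfl
        simp only [Fin.eta] at hcomp
        refine ⟨diffH p ⟨a.val / 2, by have := a.isLt; omega⟩
            ⟨b.val / 2, by have := b.isLt; omega⟩ (ξ * cfac ζ b.val / cfac ζ a.val),
          Or.inr ⟨_, _, Fin.mk_lt_mk.mpr hij, _, ?_, rfl⟩, ?_⟩
        · rw [div_pow, mul_pow, hξ, cfac_pow r ζ hζ, cfac_pow r ζ hζ, one_mul, one_div, inv_one]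
        · have h5 := hkey ((LinearMap.proj a : (Fin (2*p-1) → ℂ) →ₗ[ℂ] ℂ) - ξ • LinearMap.proj b)
          rw [hcomp, ker_two p _ _ (cfac_ne ζ hζ0 a.val)] at h5
          exact h5
    · rintro ⟨K, hK, rfl⟩
      rcases hK with ⟨i, hi, rfl⟩ | ⟨i, j, hij, ζ', hζ', rfl⟩
      · -- image of a coordinate hyperplane
        obtain ⟨ω, hωr, hω1⟩ : ∃ ω : ℂ, ω ^ r = 1 ∧ ω ≠ 1 := by
          have h := Complex.isPrimitiveRoot_exp r hr0
          exact ⟨_, h.pow_eq_one, h.ne_one (by omega)⟩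
        have hcomp := comp_phi' p ζ (ζ * ω) (2 * i.val) (2 * i.val + 1)
          (by omega) (by omega) i i (by omega) (by omega)
        rw [← sub_smul] at hcomp
        have hval : cfac ζ (2 * i.val) - ζ * ω * cfac ζ (2 * i.val + 1) = 1 - ω := by
          rw [show cfac ζ (2 * i.val) = 1 from if_pos (by omega),
            show cfac ζ (2 * i.val + 1) = ζ⁻¹ from if_neg (by omega),
            mul_comm ζ ω, mul_assoc, mul_inv_cancel₀ hζ0, mul_one]
        rw [hval] at hcomp
        have hne : (1 : ℂ) - ω ≠ 0 := sub_ne_zero.mpr (Ne.symm hω1)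
        refine ⟨diffH (2*p-1) ⟨2 * i.val, by omega⟩ ⟨2 * i.val + 1, by omega⟩ (ζ * ω),
          Or.inr ⟨_, _, Fin.mk_lt_mk.mpr (by omega), ζ * ω,
            by rw [mul_pow, hζ, hωr, one_mul], rfl⟩, ?_, ?_⟩
        · intro hle
          have h0 := LinearMap.range_le_ker_iff.mp hle
          rw [hcomp] at h0
          have h1 := congrFun (congrArg DFunLike.coe h0) (Pi.single i 1)
          simp [sub_eq_zero] at h1
          exact hω1 h1.symm
        · rw [← ker_one p _ hne i, ← hcomp]
          exact hkey _
      · -- image of a difference hyperplane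
        have hcomp := comp_phi' p ζ ζ' (2 * i.val) (2 * j.val)
          (by omega) (by omega) i j (by omega) (by omega)
        rw [show cfac ζ (2 * i.val) = 1 from if_pos (by omega),
          show cfac ζ (2 * j.val) = 1 from if_pos (by omega), mul_one, one_smul] at hcomp
        have hij' : i ≠ j := Fin.ne_of_lt hij
        have hijv : i.val < j.val := hij
        refine ⟨diffH (2*p-1) ⟨2 * i.val, by omega⟩ ⟨2 * j.val, by omega⟩ ζ',
          Or.inr ⟨_, _, Fin.mk_lt_mk.mpr (by omega), ζ', hζ', rfl⟩, ?_, ?_⟩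
        · intro hle
          have h0 := LinearMap.range_le_ker_iff.mp hle
          rw [hcomp] at h0
          have h1 := congrFun (congrArg DFunLike.coe h0) (Pi.single i 1)
          simp [Pi.single_eq_of_ne (Ne.symm hij')] at h1
        · rw [show diffH p i j ζ' = LinearMap.ker ((LinearMap.proj i :
              (Fin p → ℂ) →ₗ[ℂ] ℂ) - ζ' • LinearMap.proj j) from rfl, ← hcomp]
          exact hkey _
  rw [hrange] at G1 G2 G3
  exact ⟨G1, G2, phiMap p ζ, hinj, hrange, G3⟩
end
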